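/- There exist two polyominoes M1 and M2 with interval rows and pairwise comparable rows, related by an interchange of two adjacent rows but each having two exceptional rows, and a column-sum vector c = (1,1,1,1,1) with row sums r = (1,1,1,1,1), such that the generating polynomials of ne over F(M1,r,c) and F(M2,r,c) differ: namely ∑ x^{ne} equals x + 37x^2 + 31x^3 + 3x^4 for M1 and x + 36x^2 + 32x^3 + 3x^4 for M2. -/

import Mathlib

open Set
open scoped Classical

def Row (P : Set (ℤ × ℤ)) (y : ℤ) : Set ℤ := {x | (x, y) ∈ P}

def Col (P : Set (ℤ × ℤ)) (x : ℤ) : Set ℤ := {y | (x, y) ∈ P}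

def RowConvex (P : Set (ℤ × ℤ)) : Prop :=
  ∀ y x₁ x₂ x, x₁ ∈ Row P y → x₂ ∈ Row P y → x₁ ≤ x → x ≤ x₂ → x ∈ Row P y

def ColConvex (P : Set (ℤ × ℤ)) : Prop :=
  ∀ x y₁ y₂ y, y₁ ∈ Col P x → y₂ ∈ Col P x → y₁ ≤ y → y ≤ y₂ → y ∈ Col P x

def RowsComparable (P : Set (ℤ × ℤ)) : Prop :=
  ∀ y₁ y₂, Row P y₁ ⊆ Row P y₂ ∨ Row P y₂ ⊆ Row P y₁

def ColsComparable (P : Set (ℤ × ℤ)) : Prop :=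
  ∀ x₁ x₂, Col P x₁ ⊆ Col P x₂ ∨ Col P x₂ ⊆ Col P x₁

/-- The length of the row of `P` at height `y` (also: the row sum of a filling). -/
noncomputable def rowLen (P : Set (ℤ × ℤ)) (y : ℤ) : ℕ := (Row P y).ncard

/-- The length of the column of `P` at abscissa `x` (also: the column sum of a filling). -/
noncomputable def colLen (P : Set (ℤ × ℤ)) (x : ℤ) : ℕ := (Col P x).ncard

/-- A row is exceptional if some row strictly above it and some row strictly below it
are strictly longer. -/
def ExceptionalRow (P : Set (ℤ × ℤ)) (y : ℤ) : Prop :=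
  (∃ y' > y, rowLen P y < rowLen P y') ∧ (∃ y' < y, rowLen P y < rowLen P y')

/-- A moon polyomino: finite, row- and column-convex, intersection-free
(any two columns comparable). -/
def MoonPolyomino (P : Set (ℤ × ℤ)) : Prop :=
  P.Finite ∧ RowConvex P ∧ ColConvex P ∧ ColsComparable P

/-- An almost-moon polyomino: finite, rows are intervals, pairwise comparable rows,
and at most one exceptional row. -/
def AlmostMoon (P : Set (ℤ × ℤ)) : Prop :=
  P.Finite ∧ RowConvex P ∧ RowsComparable P ∧
    ∀ y₁ y₂, ExceptionalRow P y₁ → ExceptionalRow P y₂ → y₁ = y₂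

/-- `g` is a northeast chain of size `k` of the filling `F` in the polyomino `P`. -/
def IsNEChain (P F : Set (ℤ × ℤ)) (k : ℕ) (g : Fin k → ℤ × ℤ) : Prop :=
  (∀ r, g r ∈ F) ∧ StrictMono (fun r => (g r).1) ∧ StrictMono (fun r => (g r).2) ∧
    ∀ r s, ((g r).1, (g s).2) ∈ P

/-- The size of the largest northeast chain of the filling `F` in the polyomino `P`. -/
noncomputable def neSize (P F : Set (ℤ × ℤ)) : ℕ :=
  sSup {k | ∃ g : Fin k → ℤ × ℤ, IsNEChain P F k g}

/-- Interchange the rows at heights `y₁` and `y₂`. -/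
def rswap (y₁ y₂ : ℤ) (c : ℤ × ℤ) : ℤ × ℤ :=
  (c.1, if c.2 = y₁ then y₂ else if c.2 = y₂ then y₁ else c.2)

/-- The row-swap map on fillings: cells in columns of `S` (the support of the short row)
stay put, while the overhang cells of the long row are moved between heights `y₁`, `y₂`. -/
noncomputable def fswap (S : Set ℤ) (y₁ y₂ : ℤ) (F : Set (ℤ × ℤ)) : Set (ℤ × ℤ) :=
  (fun c => if c.1 ∈ S then c else rswap y₁ y₂ c) '' F

/-- A 01-filling with exactly one 1 in every (nonempty) row and every (nonempty) column. -/
noncomputable def PermFilling (P F : Set (ℤ × ℤ)) : Prop :=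
  F ⊆ P ∧ (∀ y, Row P y ≠ ∅ → rowLen F y = 1) ∧ ∀ x, Col P x ≠ ∅ → colLen F x = 1


/-! ### Auxiliary definitions -/

/-- The first polyomino: rows `y = 1,2,5` are `[1,5]`, rows `y = 3,4` are `[2,5]`. -/
noncomputable def M1f : Finset (ℤ × ℤ) :=
  (Finset.Icc 1 5 ×ˢ Finset.Icc 1 5).filter
    (fun c => (c.2 = 3 ∨ c.2 = 4) → 2 ≤ c.1)

/-- The second polyomino: rows `y = 1,3,5` are `[1,5]`, rows `y = 2,4` are `[2,5]`. -/
noncomputable def M2f : Finset (ℤ × ℤ) :=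
  (Finset.Icc 1 5 ×ˢ Finset.Icc 1 5).filter
    (fun c => (c.2 = 2 ∨ c.2 = 4) → 2 ≤ c.1)

def p1 (c : ℤ × ℤ) : Prop :=
  1 ≤ c.1 ∧ c.1 ≤ 5 ∧ 1 ≤ c.2 ∧ c.2 ≤ 5 ∧ ((c.2 = 3 ∨ c.2 = 4) → 2 ≤ c.1)

def p2 (c : ℤ × ℤ) : Prop :=
  1 ≤ c.1 ∧ c.1 ≤ 5 ∧ 1 ≤ c.2 ∧ c.2 ≤ 5 ∧ ((c.2 = 2 ∨ c.2 = 4) → 2 ≤ c.1)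

instance : DecidablePred p1 := fun c => by unfold p1; infer_instance
instance : DecidablePred p2 := fun c => by unfold p2; infer_instance

lemma mem_M1 (c : ℤ × ℤ) : c ∈ M1f ↔ p1 c := by
  obtain ⟨x, y⟩ := c
  rw [M1f, Finset.mem_filter, Finset.mem_product, Finset.mem_Icc, Finset.mem_Icc]
  show _ ↔ (1 ≤ x ∧ x ≤ 5 ∧ 1 ≤ y ∧ y ≤ 5 ∧ ((y = 3 ∨ y = 4) → 2 ≤ x))
  omega

lemma mem_M2 (c : ℤ × ℤ) : c ∈ M2f ↔ p2 c := by
  obtain ⟨x, y⟩ := c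
  rw [M2f, Finset.mem_filter, Finset.mem_product, Finset.mem_Icc, Finset.mem_Icc]
  show _ ↔ (1 ≤ x ∧ x ≤ 5 ∧ 1 ≤ y ∧ y ≤ 5 ∧ ((y = 2 ∨ y = 4) → 2 ≤ x))
  omega

/-- The filling associated to a permutation. -/
def toF (σ : Equiv.Perm (Fin 5)) : Finset (ℤ × ℤ) :=
  Finset.univ.image (fun i => (((σ i : ℕ) : ℤ) + 1, ((i : ℕ) : ℤ) + 1))

def goodChainP (p : ℤ × ℤ → Prop) [DecidablePred p] (s : Finset (ℤ × ℤ)) : Prop :=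
  ∀ a ∈ s, ∀ b ∈ s, (a.1 < b.1 ↔ a.2 < b.2) ∧ p (a.1, b.2)

instance (p : ℤ × ℤ → Prop) [DecidablePred p] (s : Finset (ℤ × ℤ)) :
    Decidable (goodChainP p s) := by unfold goodChainP; infer_instance

def chainSetP (p : ℤ × ℤ → Prop) [DecidablePred p] (F : Finset (ℤ × ℤ)) : Finset ℕ :=
  (F.powerset.filter (goodChainP p)).image Finset.card

def neFP (p : ℤ × ℤ → Prop) [DecidablePred p] (F : Finset (ℤ × ℤ)) : ℕ :=
  WithBot.unbotD 0 (chainSetP p F).max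

lemma zero_mem_chainSetP (p : ℤ × ℤ → Prop) [DecidablePred p] (F : Finset (ℤ × ℤ)) :
    0 ∈ chainSetP p F := by
  refine Finset.mem_image.mpr ⟨∅, Finset.mem_filter.mpr ⟨Finset.empty_mem_powerset F, ?_⟩,
    Finset.card_empty⟩
  intro a ha; simp at ha

lemma chain_set_eq (P : Set (ℤ × ℤ)) (p : ℤ × ℤ → Prop) [DecidablePred p]
    (hp : ∀ c, c ∈ P ↔ p c) (F : Finset (ℤ × ℤ)) :
    {k | ∃ g : Fin k → ℤ × ℤ, IsNEChain P (↑F) k g} = ↑(chainSetP p F) := by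
  ext k
  simp only [Set.mem_setOf_eq, chainSetP, Finset.coe_image, Set.mem_image, Finset.mem_coe,
    Finset.mem_filter, Finset.mem_powerset]
  constructor
  · rintro ⟨g, hgF, hg1, hg2, hgP⟩
    have hginj : Function.Injective g := fun i j hij => hg1.injective (by rw [hij])
    refine ⟨Finset.univ.image g, ⟨⟨?_, ?_⟩, ?_⟩⟩
    · intro c hc
      obtain ⟨i, -, rfl⟩ := Finset.mem_image.mp hc
      exact Finset.mem_coe.mp (hgF i)
    · intro a ha b hb
      obtain ⟨i, -, rfl⟩ := Finset.mem_image.mp ha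
      obtain ⟨j, -, rfl⟩ := Finset.mem_image.mp hb
      refine ⟨(hg1.lt_iff_lt).trans (hg2.lt_iff_lt).symm, ?_⟩
      exact (hp _).mp (hgP i j)
    · rw [Finset.card_image_of_injective _ hginj, Finset.card_univ, Fintype.card_fin]
  · rintro ⟨s, ⟨hsF, hgood⟩, hk⟩
    subst hk
    have key : ∀ a ∈ s, ∀ b ∈ s, a.1 = b.1 → a = b := by
      intro a ha b hb hab
      have h1 := (hgood a ha b hb).1
      have h2 := (hgood b hb a ha).1
      have : a.2 = b.2 := by omega
      exact Prod.ext hab this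
    set s' : Finset (ℤ ×ₗ ℤ) := s.map toLex.toEmbedding with hs'
    have hcard : s'.card = s.card := Finset.card_map _
    set e := s'.orderIsoOfFin hcard with he
    have hmem : ∀ r, (ofLex ((e r : ℤ ×ₗ ℤ)) : ℤ × ℤ) ∈ s := by
      intro r
      have h : (e r : ℤ ×ₗ ℤ) ∈ s.map toLex.toEmbedding := by rw [← hs']; exact (e r).2
      exact Finset.mem_map_equiv.mp h
    have hfst : StrictMono (fun r => (ofLex ((e r : ℤ ×ₗ ℤ)) : ℤ × ℤ).1) := by
      intro r t hrt
      have hlt : (e r : ℤ ×ₗ ℤ) < (e t : ℤ ×ₗ ℤ) := by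
        exact_mod_cast (e.strictMono hrt)
      have hne : (ofLex ((e r : ℤ ×ₗ ℤ)) : ℤ × ℤ) ≠ (ofLex ((e t : ℤ ×ₗ ℤ)) : ℤ × ℤ) := by
        intro hcon
        have : (e r : ℤ ×ₗ ℤ) = (e t : ℤ ×ₗ ℤ) := hcon
        exact absurd this (ne_of_lt hlt)
      rcases (Prod.Lex.lt_iff).mp hlt with h | ⟨h1, h2⟩
      · exact h
      · exact absurd (key _ (hmem r) _ (hmem t) h1) hne
    refine ⟨fun r => (ofLex ((e r : ℤ ×ₗ ℤ)) : ℤ × ℤ), ?_, hfst, ?_, ?_⟩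
    · intro r; exact Finset.mem_coe.mpr (hsF (hmem r))
    · intro r t hrt
      exact ((hgood _ (hmem r) _ (hmem t)).1).mp (hfst hrt)
    · intro r t
      exact (hp _).mpr (hgood _ (hmem r) _ (hmem t)).2

lemma neSize_eq (P : Set (ℤ × ℤ)) (p : ℤ × ℤ → Prop) [DecidablePred p]
    (hp : ∀ c, c ∈ P ↔ p c) (F : Finset (ℤ × ℤ)) :
    neSize P (↑F) = neFP p F := by
  have h0 : (chainSetP p F).Nonempty := ⟨0, zero_mem_chainSetP p F⟩
  rw [neSize, chain_set_eq P p hp F, Finset.Nonempty.csSup_eq_max' h0, neFP,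
    ← Finset.coe_max' h0, WithBot.unbotD_coe]

lemma toF_inj : Function.Injective toF := by
  intro σ τ h
  apply Equiv.ext
  intro i
  have hm : ((((σ i : ℕ) : ℤ)) + 1, ((i : ℕ) : ℤ) + 1) ∈ toF τ := by
    rw [← h]
    exact Finset.mem_image.mpr ⟨i, Finset.mem_univ i, rfl⟩
  rw [toF, Finset.mem_image] at hm
  obtain ⟨j, -, hj⟩ := hm
  rw [Prod.mk.injEq] at hj
  obtain ⟨hj1, hj2⟩ := hj
  have hji : j = i := Fin.ext (by omega)
  subst hji
  exact Fin.ext (by omega)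

lemma permChar (M : Finset (ℤ × ℤ)) (p : ℤ × ℤ → Prop) [DecidablePred p]
    (hp : ∀ c, c ∈ M ↔ p c)
    (hbound : ∀ c, p c → 1 ≤ c.1 ∧ c.1 ≤ 5 ∧ 1 ≤ c.2 ∧ c.2 ≤ 5)
    (hrow : ∀ y : ℤ, 1 ≤ y → y ≤ 5 → p (5, y))
    (hcol : ∀ x : ℤ, 1 ≤ x → x ≤ 5 → p (x, 5))
    (F : Set (ℤ × ℤ)) :
    PermFilling (↑M) F ↔
      ∃ σ : Equiv.Perm (Fin 5),
        (∀ i : Fin 5, p (((σ i : ℕ) : ℤ) + 1, ((i : ℕ) : ℤ) + 1)) ∧ F = ↑(toF σ) := by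
  have hrowne : ∀ y : ℤ, 1 ≤ y → y ≤ 5 → Row (↑M : Set (ℤ × ℤ)) y ≠ ∅ := by
    intro y h1 h2
    apply Set.nonempty_iff_ne_empty.mp
    exact ⟨5, show ((5 : ℤ), y) ∈ (↑M : Set (ℤ × ℤ)) from
      Finset.mem_coe.mpr ((hp _).mpr (hrow y h1 h2))⟩
  have hcolne : ∀ x : ℤ, 1 ≤ x → x ≤ 5 → Col (↑M : Set (ℤ × ℤ)) x ≠ ∅ := by
    intro x h1 h2
    apply Set.nonempty_iff_ne_empty.mp
    exact ⟨5, show (x, (5 : ℤ)) ∈ (↑M : Set (ℤ × ℤ)) from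
      Finset.mem_coe.mpr ((hp _).mpr (hcol x h1 h2))⟩
  constructor
  · rintro ⟨hsub, hrows, hcols⟩
    have hex : ∀ i : Fin 5, ∃ x, Row F (((i : ℕ) : ℤ) + 1) = {x} := by
      intro i
      apply Set.ncard_eq_one.mp
      apply hrows
      apply hrowne
      · omega
      · have := i.isLt; omega
    choose xv hxv using hex
    have hmemF : ∀ i, (xv i, ((i : ℕ) : ℤ) + 1) ∈ F := by
      intro i
      have : xv i ∈ Row F (((i : ℕ) : ℤ) + 1) := by rw [hxv i]; exact rfl
      exact this
    have hpxv : ∀ i, p (xv i, ((i : ℕ) : ℤ) + 1) := fun i => (hp _).mp (hsub (hmemF i))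
    have hbxv : ∀ i, 1 ≤ xv i ∧ xv i ≤ 5 :=
      fun i => ⟨(hbound _ (hpxv i)).1, (hbound _ (hpxv i)).2.1⟩
    have hinj : Function.Injective xv := by
      intro i j hij
      by_contra hne
      have h1 := hcols (xv i) (hcolne _ (hbxv i).1 (hbxv i).2)
      obtain ⟨y₀, hy₀⟩ := Set.ncard_eq_one.mp h1
      have hi : (((i : ℕ) : ℤ) + 1) ∈ Col F (xv i) := hmemF i
      have hj : (((j : ℕ) : ℤ) + 1) ∈ Col F (xv i) := by
        show (xv i, ((j : ℕ) : ℤ) + 1) ∈ F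
        rw [hij]; exact hmemF j
      rw [hy₀, Set.mem_singleton_iff] at hi hj
      exact hne (Fin.ext (by omega))
    have hb5 : ∀ i, ((xv i - 1).toNat < 5) := by intro i; have := hbxv i; omega
    set f : Fin 5 → Fin 5 := fun i => ⟨(xv i - 1).toNat, hb5 i⟩ with hf
    have hfinj : Function.Injective f := by
      intro i j hij
      apply hinj
      have h' := congrArg Fin.val hij
      simp only [hf] at h'
      have hi := hbxv i; have hj := hbxv j
      omega
    have hfbij := Finite.injective_iff_bijective.mp hfinj
    refine ⟨Equiv.ofBijective f hfbij, ?_, ?_⟩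
    case _ =>
      have hσ : ∀ i, ((Equiv.ofBijective f hfbij i : ℕ) : ℤ) + 1 = xv i := by
        intro i
        show (((f i : ℕ) : ℤ) + 1 = xv i)
        simp only [hf]
        have := hbxv i
        omega
      intro i
      rw [hσ i]
      exact hpxv i
    case _ =>
      have hσ : ∀ i, ((Equiv.ofBijective f hfbij i : ℕ) : ℤ) + 1 = xv i := by
        intro i
        show (((f i : ℕ) : ℤ) + 1 = xv i)
        simp only [hf]
        have := hbxv i
        omega
      ext c
      obtain ⟨a, b⟩ := c
      simp only [Finset.coe_image, Set.mem_image, Finset.mem_coe, toF,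
        Finset.mem_image, Finset.mem_univ, true_and, Prod.mk.injEq]
      constructor
      · intro hab
        have hpab := (hp _).mp (hsub hab)
        have hbb := hbound _ hpab
        have hblt : (b - 1).toNat < 5 := by omega
        refine ⟨⟨(b - 1).toNat, hblt⟩, ?_, ?_⟩
        · rw [hσ]
          have : a ∈ Row F b := hab
          have hbi : ((((⟨(b - 1).toNat, hblt⟩ : Fin 5) : ℕ)) : ℤ) + 1 = b := by
            simp only []
            omega
          rw [← hbi] at this
          rw [hxv _, Set.mem_singleton_iff] at this
          exact this.symm
        · simp only []
          omega
      · rintro ⟨j, hj1, hj2⟩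
        rw [hσ] at hj1
        rw [← hj1, ← hj2]
        exact hmemF j
  · rintro ⟨σ, hσp, rfl⟩
    refine ⟨?_, ?_, ?_⟩
    · intro c hc
      rw [Finset.mem_coe, toF, Finset.mem_image] at hc
      obtain ⟨i, -, rfl⟩ := hc
      exact Finset.mem_coe.mpr ((hp _).mpr (hσp i))
    · intro y hy
      obtain ⟨x, hx⟩ := Set.nonempty_iff_ne_empty.mpr hy
      have hyb := hbound _ ((hp _).mp (Finset.mem_coe.mp hx))
      have hylt : (y - 1).toNat < 5 := by
        simp only [] at hyb
        omega
      set i : Fin 5 := ⟨(y - 1).toNat, hylt⟩ with hi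
      have hrw : Row (↑(toF σ) : Set (ℤ × ℤ)) y = {((σ i : ℕ) : ℤ) + 1} := by
        ext z
        simp only [Row, Set.mem_setOf_eq, Finset.mem_coe, toF, Finset.mem_image,
          Finset.mem_univ, true_and, Prod.mk.injEq, Set.mem_singleton_iff]
        constructor
        · rintro ⟨j, hj1, hj2⟩
          have hji : j = i := by
            apply Fin.ext
            simp only [hi]
            omega
          rw [← hj1, hji]
        · intro hz
          refine ⟨i, hz.symm, ?_⟩
          simp only [hi]
          have : 1 ≤ y ∧ y ≤ 5 := ⟨hyb.2.2.1, hyb.2.2.2⟩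
          omega
      rw [rowLen, hrw]
      exact Set.ncard_singleton _
    · intro x hx
      obtain ⟨y, hy⟩ := Set.nonempty_iff_ne_empty.mpr hx
      have hxb := hbound _ ((hp _).mp (Finset.mem_coe.mp hy))
      have hxlt : (x - 1).toNat < 5 := by
        simp only [] at hxb
        omega
      set i : Fin 5 := ⟨(x - 1).toNat, hxlt⟩ with hi
      set j : Fin 5 := σ.symm i with hj
      have hcw : Col (↑(toF σ) : Set (ℤ × ℤ)) x = {((j : ℕ) : ℤ) + 1} := by
        ext z
        simp only [Col, Set.mem_setOf_eq, Finset.mem_coe, toF, Finset.mem_image,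
          Finset.mem_univ, true_and, Prod.mk.injEq, Set.mem_singleton_iff]
        constructor
        · rintro ⟨t, ht1, ht2⟩
          have hσt : σ t = i := by
            apply Fin.ext
            simp only [hi]
            omega
          have htj : t = j := by rw [hj, ← hσt, Equiv.symm_apply_apply]
          rw [← ht2, htj]
        · intro hz
          refine ⟨j, ?_, hz.symm⟩
          have hσj : σ j = i := by rw [hj]; exact Equiv.apply_symm_apply σ i
          rw [hσj]
          simp only [hi]
          have : 1 ≤ x ∧ x ≤ 5 := ⟨hxb.1, hxb.2.1⟩
          omega
      rw [colLen, hcw]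
      exact Set.ncard_singleton _

/-- The permutations whose filling lies inside the polyomino given by `p`. -/
def AP (p : ℤ × ℤ → Prop) [DecidablePred p] : Finset (Equiv.Perm (Fin 5)) :=
  Finset.univ.filter (fun σ => ∀ i : Fin 5, p (((σ i : ℕ) : ℤ) + 1, ((i : ℕ) : ℤ) + 1))

lemma count_eq (M : Finset (ℤ × ℤ)) (p : ℤ × ℤ → Prop) [DecidablePred p]
    (hp : ∀ c, c ∈ M ↔ p c)
    (hbound : ∀ c, p c → 1 ≤ c.1 ∧ c.1 ≤ 5 ∧ 1 ≤ c.2 ∧ c.2 ≤ 5)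
    (hrow : ∀ y : ℤ, 1 ≤ y → y ≤ 5 → p (5, y))
    (hcol : ∀ x : ℤ, 1 ≤ x → x ≤ 5 → p (x, 5))
    (k : ℕ) :
    {F : Set (ℤ × ℤ) | PermFilling (↑M) F ∧ neSize (↑M) F = k}.ncard
      = Multiset.count k ((AP p).1.map (fun σ => neFP p (toF σ))) := by
  have hp' : ∀ c, c ∈ (↑M : Set (ℤ × ℤ)) ↔ p c := fun c => Iff.trans Finset.mem_coe (hp c)
  have hset : {F : Set (ℤ × ℤ) | PermFilling (↑M) F ∧ neSize (↑M) F = k}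
      = (fun σ : Equiv.Perm (Fin 5) => (↑(toF σ) : Set (ℤ × ℤ))) ''
        ↑((AP p).filter (fun σ => neFP p (toF σ) = k)) := by
    ext F
    simp only [Set.mem_setOf_eq, Set.mem_image, Finset.mem_coe, Finset.mem_filter, AP,
      Finset.mem_univ, true_and]
    constructor
    · rintro ⟨hPF, hne⟩
      obtain ⟨σ, hσ1, rfl⟩ := (permChar M p hp hbound hrow hcol F).mp hPF
      refine ⟨σ, ⟨hσ1, ?_⟩, rfl⟩
      rw [← neSize_eq (↑M) p hp' (toF σ)]
      exact hne
    · rintro ⟨σ, ⟨hσ1, hσk⟩, rfl⟩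
      refine ⟨(permChar M p hp hbound hrow hcol _).mpr ⟨σ, hσ1, rfl⟩, ?_⟩
      rw [neSize_eq (↑M) p hp' (toF σ)]
      exact hσk
  rw [hset, Set.ncard_image_of_injective _
    (fun a b hab => toF_inj (Finset.coe_injective hab)), Set.ncard_coe_finset]
  rw [Multiset.count_map, Finset.card_def, Finset.filter_val]
  exact congrArg Multiset.card (Multiset.filter_congr (fun σ _ => eq_comm))

def m1vals : Multiset ℕ :=
  Multiset.replicate 1 1 + (Multiset.replicate 37 2
    + (Multiset.replicate 31 3 + Multiset.replicate 3 4))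

def m2vals : Multiset ℕ :=
  Multiset.replicate 1 1 + (Multiset.replicate 36 2
    + (Multiset.replicate 32 3 + Multiset.replicate 3 4))

set_option maxHeartbeats 1000000 in
lemma himg : M2f = M1f.image (rswap 2 3) := by decide

set_option maxHeartbeats 16000000 in
lemma hmap1 : (AP p1).1.map (fun σ => neFP p1 (toF σ)) = m1vals := by
  rw [m1vals]; decide +kernel

set_option maxHeartbeats 16000000 in
lemma hmap2 : (AP p2).1.map (fun σ => neFP p2 (toF σ)) = m2vals := by
  rw [m2vals]; decide +kernel

/-! Row computations -/

lemma row_eq (M : Finset (ℤ × ℤ)) (p : ℤ × ℤ → Prop) (hp : ∀ c, c ∈ M ↔ p c)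
    (y : ℤ) (s : Finset ℤ) (h : ∀ x : ℤ, p (x, y) ↔ x ∈ s) :
    rowLen (↑M : Set (ℤ × ℤ)) y = s.card := by
  have : Row (↑M : Set (ℤ × ℤ)) y = ↑s := by
    ext x
    rw [Row, Set.mem_setOf_eq, Finset.mem_coe, hp, Finset.mem_coe]
    exact h x
  rw [rowLen, this, Set.ncard_coe_finset]

lemma p1_iff (x y : ℤ) :
    p1 (x, y) ↔ (1 ≤ x ∧ x ≤ 5 ∧ 1 ≤ y ∧ y ≤ 5 ∧ ((y = 3 ∨ y = 4) → 2 ≤ x)) := Iff.rfl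

lemma p2_iff (x y : ℤ) :
    p2 (x, y) ↔ (1 ≤ x ∧ x ≤ 5 ∧ 1 ≤ y ∧ y ≤ 5 ∧ ((y = 2 ∨ y = 4) → 2 ≤ x)) := Iff.rfl

lemma mem_row_M1 (x y : ℤ) :
    x ∈ Row (↑M1f : Set (ℤ × ℤ)) y ↔
      (1 ≤ x ∧ x ≤ 5 ∧ 1 ≤ y ∧ y ≤ 5 ∧ ((y = 3 ∨ y = 4) → 2 ≤ x)) := by
  rw [Row, Set.mem_setOf_eq, Finset.mem_coe, mem_M1, p1_iff]

lemma mem_row_M2 (x y : ℤ) :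
    x ∈ Row (↑M2f : Set (ℤ × ℤ)) y ↔
      (1 ≤ x ∧ x ≤ 5 ∧ 1 ≤ y ∧ y ≤ 5 ∧ ((y = 2 ∨ y = 4) → 2 ≤ x)) := by
  rw [Row, Set.mem_setOf_eq, Finset.mem_coe, mem_M2, p2_iff]



set_option maxHeartbeats 1000000 in
/-- There exist two polyominoes with interval rows and pairwise comparable rows, related
by an interchange of two adjacent rows but each having two exceptional rows, whose
generating polynomials of `ne` over permutation fillings are
`x + 37x² + 31x³ + 3x⁴` and `x + 36x² + 32x³ + 3x⁴` respectively. -/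
theorem general_polyomino_counterexample :
    ∃ M₁ M₂ : Set (ℤ × ℤ),
      M₁.Finite ∧ M₂.Finite ∧
      RowConvex M₁ ∧ RowsComparable M₁ ∧ RowConvex M₂ ∧ RowsComparable M₂ ∧
      (∃ y : ℤ, M₂ = rswap y (y + 1) '' M₁) ∧
      (∃ y₁ y₂ : ℤ, y₁ ≠ y₂ ∧ ExceptionalRow M₁ y₁ ∧ ExceptionalRow M₁ y₂) ∧
      (∃ y₁ y₂ : ℤ, y₁ ≠ y₂ ∧ ExceptionalRow M₂ y₁ ∧ ExceptionalRow M₂ y₂) ∧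
      (∀ k : ℕ, {F : Set (ℤ × ℤ) | PermFilling M₁ F ∧ neSize M₁ F = k}.ncard =
        if k = 1 then 1 else if k = 2 then 37 else if k = 3 then 31 else
          if k = 4 then 3 else 0) ∧
      (∀ k : ℕ, {F : Set (ℤ × ℤ) | PermFilling M₂ F ∧ neSize M₂ F = k}.ncard =
        if k = 1 then 1 else if k = 2 then 36 else if k = 3 then 32 else
          if k = 4 then 3 else 0) := by
  have hb1 : ∀ c, p1 c → 1 ≤ c.1 ∧ c.1 ≤ 5 ∧ 1 ≤ c.2 ∧ c.2 ≤ 5 := by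
    rintro ⟨a, b⟩ hc
    rw [p1_iff] at hc
    exact ⟨hc.1, hc.2.1, hc.2.2.1, hc.2.2.2.1⟩
  have hb2 : ∀ c, p2 c → 1 ≤ c.1 ∧ c.1 ≤ 5 ∧ 1 ≤ c.2 ∧ c.2 ≤ 5 := by
    rintro ⟨a, b⟩ hc
    rw [p2_iff] at hc
    exact ⟨hc.1, hc.2.1, hc.2.2.1, hc.2.2.2.1⟩
  have hr1 : ∀ y : ℤ, 1 ≤ y → y ≤ 5 → p1 (5, y) := by
    intro y h1 h2; rw [p1_iff]; omega
  have hr2 : ∀ y : ℤ, 1 ≤ y → y ≤ 5 → p2 (5, y) := by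
    intro y h1 h2; rw [p2_iff]; omega
  have hc1 : ∀ x : ℤ, 1 ≤ x → x ≤ 5 → p1 (x, 5) := by
    intro x h1 h2; rw [p1_iff]; omega
  have hc2 : ∀ x : ℤ, 1 ≤ x → x ≤ 5 → p2 (x, 5) := by
    intro x h1 h2; rw [p2_iff]; omega
  -- row lengths
  have hfull : ∀ x : ℤ, (1 ≤ x ∧ x ≤ 5) ↔ x ∈ ({1,2,3,4,5} : Finset ℤ) := by
    intro x
    simp only [Finset.mem_insert, Finset.mem_singleton]
    omega
  have hshort : ∀ x : ℤ, (2 ≤ x ∧ x ≤ 5) ↔ x ∈ ({2,3,4,5} : Finset ℤ) := by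
    intro x
    simp only [Finset.mem_insert, Finset.mem_singleton]
    omega
  have hl12 : rowLen (↑M1f : Set (ℤ × ℤ)) 2 = 5 := by
    refine row_eq M1f p1 mem_M1 2 {1,2,3,4,5} (fun x => ?_)
    rw [p1_iff, ← hfull x]; omega
  have hl13 : rowLen (↑M1f : Set (ℤ × ℤ)) 3 = 4 := by
    refine row_eq M1f p1 mem_M1 3 {2,3,4,5} (fun x => ?_)
    rw [p1_iff, ← hshort x]; omega
  have hl14 : rowLen (↑M1f : Set (ℤ × ℤ)) 4 = 4 := by
    refine row_eq M1f p1 mem_M1 4 {2,3,4,5} (fun x => ?_)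
    rw [p1_iff, ← hshort x]; omega
  have hl15 : rowLen (↑M1f : Set (ℤ × ℤ)) 5 = 5 := by
    refine row_eq M1f p1 mem_M1 5 {1,2,3,4,5} (fun x => ?_)
    rw [p1_iff, ← hfull x]; omega
  have hl21 : rowLen (↑M2f : Set (ℤ × ℤ)) 1 = 5 := by
    refine row_eq M2f p2 mem_M2 1 {1,2,3,4,5} (fun x => ?_)
    rw [p2_iff, ← hfull x]; omega
  have hl22 : rowLen (↑M2f : Set (ℤ × ℤ)) 2 = 4 := by
    refine row_eq M2f p2 mem_M2 2 {2,3,4,5} (fun x => ?_)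
    rw [p2_iff, ← hshort x]; omega
  have hl23 : rowLen (↑M2f : Set (ℤ × ℤ)) 3 = 5 := by
    refine row_eq M2f p2 mem_M2 3 {1,2,3,4,5} (fun x => ?_)
    rw [p2_iff, ← hfull x]; omega
  have hl24 : rowLen (↑M2f : Set (ℤ × ℤ)) 4 = 4 := by
    refine row_eq M2f p2 mem_M2 4 {2,3,4,5} (fun x => ?_)
    rw [p2_iff, ← hshort x]; omega
  have hl25 : rowLen (↑M2f : Set (ℤ × ℤ)) 5 = 5 := by
    refine row_eq M2f p2 mem_M2 5 {1,2,3,4,5} (fun x => ?_)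
    rw [p2_iff, ← hfull x]; omega
  refine ⟨↑M1f, ↑M2f, M1f.finite_toSet, M2f.finite_toSet, ?_, ?_, ?_, ?_, ⟨2, ?_⟩,
    ⟨3, 4, by norm_num, ?_, ?_⟩, ⟨2, 4, by norm_num, ?_, ?_⟩, ?_, ?_⟩
  · -- RowConvex M1
    intro y x₁ x₂ x h₁ h₂ l1 l2
    rw [mem_row_M1] at h₁ h₂ ⊢
    omega
  · -- RowsComparable M1
    intro y₁ y₂
    by_cases h2 : 1 ≤ y₂ ∧ y₂ ≤ 5
    · by_cases h1 : 1 ≤ y₁ ∧ y₁ ≤ 5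
      · by_cases hs : y₁ = 3 ∨ y₁ = 4
        · left; intro x hx; rw [mem_row_M1] at hx ⊢; omega
        · right; intro x hx; rw [mem_row_M1] at hx ⊢; omega
      · left; intro x hx; rw [mem_row_M1] at hx ⊢; omega
    · right; intro x hx; rw [mem_row_M1] at hx ⊢; omega
  · -- RowConvex M2
    intro y x₁ x₂ x h₁ h₂ l1 l2
    rw [mem_row_M2] at h₁ h₂ ⊢
    omega
  · -- RowsComparable M2
    intro y₁ y₂
    by_cases h2 : 1 ≤ y₂ ∧ y₂ ≤ 5
    · by_cases h1 : 1 ≤ y₁ ∧ y₁ ≤ 5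
      · by_cases hs : y₁ = 2 ∨ y₁ = 4
        · left; intro x hx; rw [mem_row_M2] at hx ⊢; omega
        · right; intro x hx; rw [mem_row_M2] at hx ⊢; omega
      · left; intro x hx; rw [mem_row_M2] at hx ⊢; omega
    · right; intro x hx; rw [mem_row_M2] at hx ⊢; omega
  · -- swap
    show (↑M2f : Set (ℤ × ℤ)) = rswap 2 (2 + 1) '' ↑M1f
    norm_num
    rw [← Finset.coe_image]
    exact Finset.coe_inj.mpr himg
  · exact ⟨⟨5, by norm_num, by rw [hl13, hl15]; norm_num⟩,
      ⟨2, by norm_num, by rw [hl13, hl12]; norm_num⟩⟩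
  · exact ⟨⟨5, by norm_num, by rw [hl14, hl15]; norm_num⟩,
      ⟨2, by norm_num, by rw [hl14, hl12]; norm_num⟩⟩
  · exact ⟨⟨3, by norm_num, by rw [hl22, hl23]; norm_num⟩,
      ⟨1, by norm_num, by rw [hl22, hl21]; norm_num⟩⟩
  · exact ⟨⟨5, by norm_num, by rw [hl24, hl25]; norm_num⟩,
      ⟨3, by norm_num, by rw [hl24, hl23]; norm_num⟩⟩
  · -- counts for M1
    intro k
    rw [count_eq M1f p1 mem_M1 hb1 hr1 hc1 k, hmap1]
    simp only [m1vals, Multiset.count_add, Multiset.count_replicate]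
    split_ifs <;> omega
  · -- counts for M2
    intro k
    rw [count_eq M2f p2 mem_M2 hb2 hr2 hc2 k, hmap2]
    simp only [m2vals, Multiset.count_add, Multiset.count_replicate]
    split_ifs <;> omega
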